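/- arXiv:1710.09430 — 4 statements merged into one kernel-verified Lean document; each statement's English description precedes it below -/
import Mathlib

section
/- Let H be a symmetric positive definite d×d matrix with minimal eigenvalue μ > 0, and suppose E[‖x‖² x xᵀ] ⪯ R² H for a random vector x with E[x xᵀ] = H. If 0 < γ ≤ 1/R², then for any fixed vector v, E[‖(I − γ x xᵀ) v‖²] ≤ (1 − γμ) ‖v‖². -/
open MeasureTheory Matrix

open Pointwise

lemma quad_form_lower_bound {d : ℕ} (H : Matrix (Fin d) (Fin d) ℝ) (hH : H.PosDef) (m : ℝ)
    (hmin : ∀ μ' ∈ spectrum ℝ H, m ≤ μ') (v : Fin d → ℝ) :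
    m * ∑ i, v i ^ 2 ≤ ∑ i, ∑ j, v i * v j * H i j := by
  set B : Matrix (Fin d) (Fin d) ℝ := H - m • 1 with hBdef
  have hB : B.IsHermitian := by
    unfold B
    simp only [Matrix.IsHermitian, Matrix.conjTranspose_sub, Matrix.conjTranspose_smul, hH.1.eq,
      star_trivial, Matrix.conjTranspose_one, sub_left_inj]
  have hspec : spectrum ℝ B = spectrum ℝ H - ({m} : Set ℝ) := by
    rw [spectrum.sub_singleton_eq]
    rw [Algebra.algebraMap_eq_smul_one]
  have hpsd : B.PosSemidef := by
    apply hB.posSemidef_iff_eigenvalues_nonneg.mpr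
    intro i
    have hmem := hB.eigenvalues_mem_spectrum_real i
    rw [hspec] at hmem
    obtain ⟨a, ha, b, hb, hab⟩ := hmem
    simp only [Set.mem_singleton_iff] at hb
    have h1 := hmin a ha
    have hab' : a - b = hB.eigenvalues i := hab
    rw [hb] at hab'
    show (0:ℝ) ≤ _
    linarith
  have h0 := hpsd.dotProduct_mulVec_nonneg v
  have hqe : star v ⬝ᵥ B *ᵥ v = (∑ i, ∑ j, v i * v j * H i j) - m * ∑ i, v i ^ 2 := by
    unfold B
    simp only [star_trivial, dotProduct, Matrix.mulVec, Matrix.sub_apply, Matrix.smul_apply,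
      Matrix.one_apply, smul_eq_mul, mul_ite, mul_one, mul_zero, sub_mul, ite_mul, zero_mul,
      Finset.sum_sub_distrib, Finset.sum_ite_eq, Finset.mem_univ, if_true, mul_sub,
      Finset.mul_sum]
    congr 1
    · exact Finset.sum_congr rfl fun i _ => Finset.sum_congr rfl fun j _ => by ring
    · exact Finset.sum_congr rfl fun i _ => by ring
  rw [hqe] at h0
  linarith

/-- One-step contraction of the noiseless SGD process:
if `H = E[xxᵀ]` is positive definite with least eigenvalue `m`, the fourth
moment bound `E[‖x‖² xxᵀ] ⪯ R² H` holds, and `0 < γ ≤ 1/R²`, then for every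
vector `v`, `E[‖(I − γ xxᵀ)v‖²] ≤ (1 − γ m)‖v‖²`. -/
theorem sgd_bias_one_step_contraction
    {d : ℕ} {Ω : Type*} [MeasurableSpace Ω] (μ : Measure Ω)
    [IsProbabilityMeasure μ] (x : Ω → (Fin d → ℝ))
    (H M : Matrix (Fin d) (Fin d) ℝ)
    (hHdef : ∀ i j, H i j = ∫ ω, x ω i * x ω j ∂μ)
    (hHint : ∀ i j, Integrable (fun ω => x ω i * x ω j) μ)
    (hMdef : ∀ i j, M i j = ∫ ω, (∑ k, x ω k ^ 2) * (x ω i * x ω j) ∂μ)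
    (hMint : ∀ i j, Integrable (fun ω => (∑ k, x ω k ^ 2) * (x ω i * x ω j)) μ)
    (hH : H.PosDef) (m : ℝ) (hm : 0 < m)
    (hmin : ∀ μ' ∈ spectrum ℝ H, m ≤ μ')
    (hmeig : m ∈ spectrum ℝ H)
    (R2 : ℝ) (hR : (R2 • H - M).PosSemidef)
    (γ : ℝ) (hγ0 : 0 < γ) (hγ : γ ≤ 1 / R2)
    (v : Fin d → ℝ) :
    ∫ ω, ∑ i, (((1 : Matrix (Fin d) (Fin d) ℝ)
        - γ • vecMulVec (x ω) (x ω)).mulVec v i) ^ 2 ∂μ ≤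
      (1 - γ * m) * ∑ i, (v i) ^ 2 := by
  have hR2 : 0 < R2 := by
    by_contra h
    push_neg at h
    have : 1 / R2 ≤ 0 := div_nonpos_of_nonneg_of_nonpos zero_le_one h
    linarith
  set s : Ω → ℝ := fun ω => ∑ j, x ω j * v j with hs
  set n2 : Ω → ℝ := fun ω => ∑ k, x ω k ^ 2 with hn2
  set S : ℝ := ∑ i, v i ^ 2 with hS
  -- pointwise expansion
  have key : ∀ ω, (∑ i, (((1 : Matrix (Fin d) (Fin d) ℝ)
        - γ • vecMulVec (x ω) (x ω)).mulVec v i) ^ 2)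
      = S - 2 * γ * s ω ^ 2 + γ ^ 2 * (n2 ω * s ω ^ 2) := by
    intro ω
    have h1 : ∀ i, ((1 : Matrix (Fin d) (Fin d) ℝ)
        - γ • vecMulVec (x ω) (x ω)).mulVec v i = v i - γ * (x ω i * s ω) := by
      intro i
      simp only [Matrix.mulVec, dotProduct, Matrix.sub_apply, Matrix.smul_apply,
        Matrix.one_apply, Matrix.vecMulVec_apply, smul_eq_mul, sub_mul, ite_mul, one_mul,
        zero_mul, Finset.sum_sub_distrib, Finset.sum_ite_eq, Finset.mem_univ, if_true]
      congr 1
      rw [hs, Finset.mul_sum, Finset.mul_sum]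
      exact Finset.sum_congr rfl fun j _ => by ring
    simp only [h1]
    have expand : ∀ i ∈ Finset.univ, (v i - γ * (x ω i * s ω)) ^ 2
        = v i ^ 2 - (2 * γ * s ω) * (x ω i * v i) + (γ ^ 2 * s ω ^ 2) * (x ω i ^ 2) :=
      fun i _ => by ring
    rw [Finset.sum_congr rfl expand, Finset.sum_add_distrib, Finset.sum_sub_distrib,
      ← Finset.mul_sum, ← Finset.mul_sum]
    have hsum : ∑ i, x ω i * v i = s ω := rfl
    rw [hsum, hS, hn2]
    ring
  -- double-sum representations
  have hs2eq : ∀ ω, s ω ^ 2 = ∑ i, ∑ j, v i * v j * (x ω i * x ω j) := by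
    intro ω
    rw [sq, hs, Finset.sum_mul_sum]
    exact Finset.sum_congr rfl fun i _ => Finset.sum_congr rfl fun j _ => by ring
  have hn2s2eq : ∀ ω, n2 ω * s ω ^ 2 = ∑ i, ∑ j, v i * v j * (n2 ω * (x ω i * x ω j)) := by
    intro ω
    rw [hs2eq, Finset.mul_sum]
    exact Finset.sum_congr rfl fun i _ => by
      rw [Finset.mul_sum]; exact Finset.sum_congr rfl fun j _ => by ring
  -- integrability
  have hs2int : Integrable (fun ω => s ω ^ 2) μ := by
    simp only [hs2eq]
    exact integrable_finset_sum _ fun i _ => integrable_finset_sum _ fun j _ =>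
      (hHint i j).const_mul _
  have hn2s2int : Integrable (fun ω => n2 ω * s ω ^ 2) μ := by
    simp only [hn2s2eq]
    exact integrable_finset_sum _ fun i _ => integrable_finset_sum _ fun j _ =>
      (hMint i j).const_mul _
  -- integral values
  have hIs : ∫ ω, s ω ^ 2 ∂μ = ∑ i, ∑ j, v i * v j * H i j := by
    simp only [hs2eq]
    rw [integral_finset_sum _ fun i _ => integrable_finset_sum _ fun j _ =>
      (hHint i j).const_mul _]
    refine Finset.sum_congr rfl fun i _ => ?_
    rw [integral_finset_sum _ fun j _ => (hHint i j).const_mul _]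
    refine Finset.sum_congr rfl fun j _ => ?_
    rw [integral_const_mul, hHdef i j]
  have hIn : ∫ ω, n2 ω * s ω ^ 2 ∂μ = ∑ i, ∑ j, v i * v j * M i j := by
    simp only [hn2s2eq]
    rw [integral_finset_sum _ fun i _ => integrable_finset_sum _ fun j _ =>
      (hMint i j).const_mul _]
    refine Finset.sum_congr rfl fun i _ => ?_
    rw [integral_finset_sum _ fun j _ => (hMint i j).const_mul _]
    refine Finset.sum_congr rfl fun j _ => ?_
    rw [integral_const_mul, hMdef i j]
  set QH : ℝ := ∑ i, ∑ j, v i * v j * H i j with hQH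
  set QM : ℝ := ∑ i, ∑ j, v i * v j * M i j with hQM
  -- main integral
  have hmain : ∫ ω, (∑ i, (((1 : Matrix (Fin d) (Fin d) ℝ)
        - γ • vecMulVec (x ω) (x ω)).mulVec v i) ^ 2) ∂μ
      = S - 2 * γ * QH + γ ^ 2 * QM := by
    simp only [key]
    have hint1 : Integrable (fun ω => S - 2 * γ * s ω ^ 2) μ :=
      (integrable_const S).sub (hs2int.const_mul (2 * γ))
    have hint2 : Integrable (fun ω => γ ^ 2 * (n2 ω * s ω ^ 2)) μ :=
      hn2s2int.const_mul (γ ^ 2)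
    rw [show (∫ ω, (S - 2 * γ * s ω ^ 2 + γ ^ 2 * (n2 ω * s ω ^ 2)) ∂μ)
        = (∫ ω, (S - 2 * γ * s ω ^ 2) ∂μ) + ∫ ω, γ ^ 2 * (n2 ω * s ω ^ 2) ∂μ from
        integral_add hint1 hint2,
      show (∫ ω, (S - 2 * γ * s ω ^ 2) ∂μ)
        = (∫ _ω, S ∂μ) - ∫ ω, 2 * γ * s ω ^ 2 ∂μ from
        integral_sub (integrable_const S) (hs2int.const_mul (2 * γ)),
      integral_const_mul, integral_const_mul, integral_const, hIs, hIn]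
    simp
  rw [hmain]
  -- inequalities
  have hQHge : m * S ≤ QH := quad_form_lower_bound H hH m hmin v
  have hSnn : 0 ≤ S := Finset.sum_nonneg fun i _ => sq_nonneg _
  have hQHnn : 0 ≤ QH := le_trans (by positivity) hQHge
  have hQMle : QM ≤ R2 * QH := by
    have h0 := hR.dotProduct_mulVec_nonneg v
    have hqe : star v ⬝ᵥ (R2 • H - M) *ᵥ v = R2 * QH - QM := by
      simp only [star_trivial, dotProduct, Matrix.mulVec, Matrix.sub_apply, Matrix.smul_apply,
        smul_eq_mul, sub_mul, Finset.sum_sub_distrib, mul_sub, Finset.mul_sum, hQH, hQM]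
      congr 1
      · exact Finset.sum_congr rfl fun i _ => Finset.sum_congr rfl fun j _ => by ring
      · exact Finset.sum_congr rfl fun i _ => Finset.sum_congr rfl fun j _ => by ring
    rw [hqe] at h0
    linarith
  have hγR2 : γ * R2 ≤ 1 := by
    rw [div_eq_mul_inv, one_mul] at hγ
    calc γ * R2 ≤ R2⁻¹ * R2 := by nlinarith
    _ = 1 := inv_mul_cancel₀ (ne_of_gt hR2)
  nlinarith [mul_nonneg (mul_nonneg hγ0.le hγ0.le) hQHnn, sq_nonneg γ,
    mul_le_mul_of_nonneg_left hQMle (sq_nonneg γ),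
    mul_le_mul_of_nonneg_right hγR2 (mul_nonneg hγ0.le hQHnn)]
end

section
/- Let H be symmetric positive definite, γ > 0 with I − γH ⪰ 0, and define T̃(M) := HM + MH − γHMH on symmetric matrices. Then for any symmetric M, the matrix X := γ Σ_{t=0}^∞ (I − γH)^t M (I − γH)^t is well-defined (the series converges) and satisfies T̃(X) = M. -/
open Matrix

section Aux

variable {d : ℕ}

private lemma five_mul_entry (U N V : Matrix (Fin d) (Fin d) ℝ) (v w : Fin d → ℝ)
    (i j : Fin d) :
    (U * diagonal v * N * diagonal w * V) i j
      = ∑ l : Fin d, ∑ k : Fin d, U i k * v k * N k l * (w l * V l j) := by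
  simp [Matrix.mul_apply, diagonal, Finset.sum_mul, Finset.mul_sum, mul_assoc]

private lemma algebra_step {d : ℕ} (H S M : Matrix (Fin d) (Fin d) ℝ) (γ : ℝ)
    (hkey : (1 - γ • H) * S * (1 - γ • H) + M = S) :
    H * (γ • S) + (γ • S) * H - γ • (H * (γ • S) * H) = M := by
  have hM2 : M = S - (1 - γ • H) * S * (1 - γ • H) := eq_sub_of_add_eq' hkey
  rw [hM2]
  simp only [sub_mul, mul_sub, one_mul, mul_one, smul_mul_assoc, mul_smul_comm, smul_sub,
    smul_smul]
  abel

end Aux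

/-- For `H` symmetric positive definite, `γ > 0` with `0 ⪯ I − γH`, and `M`
symmetric, the series `X = γ Σ_t (I−γH)^t M (I−γH)^t` converges and satisfies
`T̃(X) = HX + XH − γHXH = M`. -/
theorem tilde_T_inverse_formula
    {d : ℕ} (H : Matrix (Fin d) (Fin d) ℝ) (hH : H.PosDef)
    (γ : ℝ) (hγ : 0 < γ)
    (hle : ((1 : Matrix (Fin d) (Fin d) ℝ) - γ • H).PosSemidef)
    (M : Matrix (Fin d) (Fin d) ℝ) (hM : M.IsSymm) :
    Summable (fun t : ℕ => ((1 : Matrix (Fin d) (Fin d) ℝ) - γ • H) ^ t * M *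
        ((1 : Matrix (Fin d) (Fin d) ℝ) - γ • H) ^ t) ∧
    (let X := γ • ∑' t : ℕ, ((1 : Matrix (Fin d) (Fin d) ℝ) - γ • H) ^ t * M *
        ((1 : Matrix (Fin d) (Fin d) ℝ) - γ • H) ^ t
     H * X + X * H - γ • (H * X * H) = M) := by
  set A : Matrix (Fin d) (Fin d) ℝ := (1 : Matrix (Fin d) (Fin d) ℝ) - γ • H with hAdef
  set f : ℕ → Matrix (Fin d) (Fin d) ℝ := fun t => A ^ t * M * A ^ t with hfdef
  have hAH : A.IsHermitian := hle.1
  set U : Matrix (Fin d) (Fin d) ℝ := (IsHermitian.eigenvectorUnitary hAH : Matrix (Fin d) (Fin d) ℝ) with hUdef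
  set e : Fin d → ℝ := hAH.eigenvalues with hedef
  have hUU : U * star U = 1 :=
    (Matrix.mem_unitaryGroup_iff).mp (IsHermitian.eigenvectorUnitary hAH).2
  have hUU' : star U * U = 1 := Unitary.coe_star_mul_self (IsHermitian.eigenvectorUnitary hAH)
  -- eigenvalue bounds
  have he0 : ∀ k, 0 ≤ e k := fun k => hle.eigenvalues_nonneg k
  have he1 : ∀ k, e k < 1 := by
    intro k
    set v : Fin d → ℝ := ⇑(hAH.eigenvectorBasis k) with hvdef
    have hv0 : v ≠ 0 := by
      have := hAH.eigenvectorBasis.orthonormal.ne_zero k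
      intro hc
      apply this
      ext i
      exact congrFun hc i
    have hAv : A *ᵥ v = e k • v := hAH.mulVec_eigenvectorBasis k
    have hHv : (γ • H) *ᵥ v = (1 - e k) • v := by
      have h1 : (γ • H) *ᵥ v = (1 : Matrix (Fin d) (Fin d) ℝ) *ᵥ v - A *ᵥ v := by
        rw [← Matrix.sub_mulVec, hAdef]; simp
      rw [h1, hAv, Matrix.one_mulVec]
      ext i; simp [sub_smul]; ring
    have hvv : (0:ℝ) < dotProduct (star v) v := by
      have hvv0 : dotProduct (star v) v = ∑ i, v i * v i := by
        simp [dotProduct]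
      rw [hvv0]
      have hex : ∃ i, v i ≠ 0 := by
        by_contra hc
        push_neg at hc
        exact hv0 (funext hc)
      obtain ⟨i, hi⟩ := hex
      apply Finset.sum_pos' (fun i _ => mul_self_nonneg _)
      exact ⟨i, Finset.mem_univ i, mul_self_pos.mpr hi⟩
    have hpos : (0:ℝ) < dotProduct (star v) (H *ᵥ v) := hH.dotProduct_mulVec_pos hv0
    have hq : γ * dotProduct (star v) (H *ᵥ v)
        = (1 - e k) * dotProduct (star v) v := by
      have h1 : dotProduct (star v) ((γ • H) *ᵥ v)
          = dotProduct (star v) ((1 - e k) • v) := by rw [hHv]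
      simpa [Matrix.smul_mulVec, dotProduct_smul, smul_eq_mul] using h1
    nlinarith
  -- powers of A via spectral theorem
  have hspec : A = U * diagonal e * star U := by
    have := hAH.spectral_theorem
    simpa [hUdef, hedef, Function.comp] using this
  have hpow : ∀ t : ℕ, A ^ t = U * diagonal (fun k => e k ^ t) * star U := by
    intro t
    induction t with
    | zero => simp [hUU]
    | succ t ih =>
        rw [pow_succ, ih]
        conv_lhs => rw [hspec]
        calc U * diagonal (fun k => e k ^ t) * star U * (U * diagonal e * star U)
            = U * diagonal (fun k => e k ^ t) * (star U * U) * diagonal e * star U := by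
              simp only [mul_assoc]
          _ = U * (diagonal (fun k => e k ^ t) * diagonal e) * star U := by
              rw [hUU']; simp only [mul_one, mul_assoc]
          _ = U * diagonal (fun k => e k ^ (t + 1)) * star U := by
              rw [diagonal_mul_diagonal]
              simp [pow_succ]
  set N : Matrix (Fin d) (Fin d) ℝ := star U * M * U with hNdef
  have hf : ∀ t, f t = U * diagonal (fun k => e k ^ t) * N * diagonal (fun k => e k ^ t) * star U := by
    intro t
    rw [hfdef]
    simp only [hpow t, hNdef]
    simp only [mul_assoc]
  -- summability
  have hsum : Summable f := by
    refine Pi.summable.mpr fun i => Pi.summable.mpr fun j => ?_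
    have hcongr : (fun t => f t i j)
        = fun t => ∑ l : Fin d, ∑ k : Fin d, (U i k * N k l * (star U) l j) * (e k * e l) ^ t := by
      funext t
      rw [hf t, five_mul_entry]
      refine Finset.sum_congr rfl fun l _ => Finset.sum_congr rfl fun k _ => ?_
      rw [mul_pow]; ring
    rw [hcongr]
    refine summable_sum fun l _ => summable_sum fun k _ => ?_
    refine Summable.mul_left _ ?_
    refine summable_geometric_of_lt_one (mul_nonneg (he0 k) (he0 l)) ?_
    have h1 := he1 k; have h2 := he1 l; have h3 := he0 k; have h4 := he0 l
    nlinarith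
  refine ⟨hsum, ?_⟩
  set S : Matrix (Fin d) (Fin d) ℝ := ∑' t, f t with hSdef
  have hS : HasSum f S := hsum.hasSum
  -- A * S * A = S - M
  have hmap : HasSum (fun t => A * f t * A) (A * S * A) := by
    have hcont : Continuous fun X : Matrix (Fin d) (Fin d) ℝ =>
        ((AddMonoidHom.mulLeft A).comp (AddMonoidHom.mulRight A)) X := by
      simp only [AddMonoidHom.coe_comp, AddMonoidHom.coe_mulLeft, AddMonoidHom.coe_mulRight,
        Function.comp]
      exact continuous_const.matrix_mul (continuous_id.matrix_mul continuous_const)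
    have h := hS.map ((AddMonoidHom.mulLeft A).comp (AddMonoidHom.mulRight A)) hcont
    have hfun : (((AddMonoidHom.mulLeft A).comp (AddMonoidHom.mulRight A)) ∘ f)
        = fun t => A * f t * A := by
      funext t
      simp [AddMonoidHom.mulLeft, AddMonoidHom.mulRight, mul_assoc]
    have hval : ((AddMonoidHom.mulLeft A).comp (AddMonoidHom.mulRight A)) S = A * S * A := by
      simp [AddMonoidHom.mulLeft, AddMonoidHom.mulRight, mul_assoc]
    rw [hfun, hval] at h
    exact h
  have hshift : (fun t => A * f t * A) = fun t => f (t + 1) := by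
    funext t
    have hc : A * A ^ t = A ^ t * A := ((Commute.refl A).pow_right t).eq
    show A * (A ^ t * M * A ^ t) * A = A ^ (t + 1) * M * A ^ (t + 1)
    calc A * (A ^ t * M * A ^ t) * A = A * A ^ t * (M * (A ^ t * A)) := by
          simp only [mul_assoc]
      _ = A ^ t * A * (M * (A ^ t * A)) := by rw [hc]
      _ = A ^ (t + 1) * M * A ^ (t + 1) := by simp only [pow_succ, mul_assoc]
  rw [hshift] at hmap
  have h2 : HasSum f (A * S * A + ∑ i ∈ Finset.range 1, f i) := (hasSum_nat_add_iff 1).mp hmap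
  have hf0 : f 0 = M := by rw [hfdef]; simp
  have hkey : A * S * A + M = S := by
    have := h2.unique hS
    simpa [hf0] using this
  -- final algebra
  show H * (γ • S) + (γ • S) * H - γ • (H * (γ • S) * H) = M
  exact algebra_step H S M γ hkey
end

section
/- Suppose HC + CH = γ S(C) + γ Σ with H symmetric positive definite, C, Σ symmetric positive semidefinite, γ > 0, and suppose S(C) ⪯ κ H for some κ ≥ 0. Then Tr(C) ≤ (γ/2) Tr(H^{-1}Σ) + (γ/2) κ d. -/
open Matrix

lemma psd_trace_nonneg {n : ℕ} {A : Matrix (Fin n) (Fin n) ℝ}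
    (hA : A.PosSemidef) : 0 ≤ A.trace := by
  rw [Matrix.trace]
  refine Finset.sum_nonneg fun i _ => ?_
  have := hA.diag_nonneg (i := i)
  simpa [Matrix.diag, dotProduct, Matrix.mulVec, Pi.single_apply,
    Finset.sum_ite_eq, Finset.sum_ite_eq'] using this

open scoped MatrixOrder in
lemma psd_trace_mul_nonneg {n : ℕ} {A B : Matrix (Fin n) (Fin n) ℝ}
    (hA : A.PosSemidef) (hB : B.PosSemidef) : 0 ≤ (A * B).trace := by
  have h1 : A * B = A * (CFC.sqrt B * CFC.sqrt B) := by rw [CFC.sqrt_mul_sqrt_self B hB.nonneg]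
  have h2 : (A * (CFC.sqrt B * CFC.sqrt B)).trace = (CFC.sqrt B * A * CFC.sqrt B).trace := by
    rw [← Matrix.mul_assoc, Matrix.trace_mul_cycle]
  have h3 : (CFC.sqrt B * A * CFC.sqrt B).PosSemidef := by
    have := hA.conjTranspose_mul_mul_same (CFC.sqrt B)
    rwa [(CFC.sqrt_nonneg B).posSemidef.isHermitian.eq] at this
  rw [h1, h2]
  exact psd_trace_nonneg h3

/-- From `HC + CH = γS(C) + γΣ` with `S(C) ⪯ κH`, one gets
`Tr(C) ≤ (γ/2) Tr(H⁻¹Σ) + (γ/2) κ d`. -/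
theorem trace_fixed_point_bound
    {d : ℕ} (H C Sg SC : Matrix (Fin d) (Fin d) ℝ)
    (hH : H.PosDef) (hC : C.PosSemidef) (hSg : Sg.PosSemidef)
    (hSCpsd : SC.PosSemidef) (κ : ℝ) (hκ : 0 ≤ κ)
    (hSCle : (κ • H - SC).PosSemidef)
    (γ : ℝ) (hγ : 0 < γ)
    (heq : H * C + C * H = γ • SC + γ • Sg) :
    C.trace ≤ (γ / 2) * (H⁻¹ * Sg).trace + (γ / 2) * κ * d := by
  have hdet : IsUnit H.det := isUnit_iff_ne_zero.mpr hH.det_pos.ne'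
  have hinv : H⁻¹ * H = 1 := Matrix.nonsing_inv_mul H hdet
  have hKpsd : (H⁻¹).PosSemidef := hH.inv.posSemidef
  -- multiply the fixed point equation by H⁻¹ and take traces
  have key : 2 * C.trace = γ * (H⁻¹ * SC).trace + γ * (H⁻¹ * Sg).trace := by
    have := congrArg (fun M => (H⁻¹ * M).trace) heq
    simp only [Matrix.mul_add, Matrix.trace_add, Matrix.mul_smul,
      Matrix.trace_smul, smul_eq_mul] at this
    have e1 : (H⁻¹ * (H * C)).trace = C.trace := by
      rw [← Matrix.mul_assoc, hinv, Matrix.one_mul]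
    have e2 : (H⁻¹ * (C * H)).trace = C.trace := by
      rw [← Matrix.mul_assoc, Matrix.trace_mul_cycle,
        Matrix.mul_nonsing_inv H hdet, Matrix.one_mul]
    rw [e1, e2] at this
    linarith
  have hbound : (H⁻¹ * SC).trace ≤ κ * d := by
    have h0 : 0 ≤ (H⁻¹ * (κ • H - SC)).trace := psd_trace_mul_nonneg hKpsd hSCle
    have : H⁻¹ * (κ • H - SC) = κ • (1 : Matrix (Fin d) (Fin d) ℝ) - H⁻¹ * SC := by
      rw [Matrix.mul_sub, Matrix.mul_smul, hinv]
    rw [this, Matrix.trace_sub, Matrix.trace_smul, Matrix.trace_one] at h0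
    simp only [smul_eq_mul, Fintype.card_fin] at h0
    push_cast
    linarith
  nlinarith [psd_trace_mul_nonneg hKpsd hSg]
end

section
/- Let H be symmetric positive definite with 0 ⪯ I − γH ≺ I, let ρ ∈ [0, 1) and k ≥ 0. Suppose a symmetric PSD matrix C satisfies C ⪯ γ L(S(C)) + k·L(H), where L(M) := γ Σ_{t=0}^∞ (I−γH)^t M (I−γH)^t and S is a monotone linear operator on symmetric matrices (0 ⪯ M ⪯ M' implies 0 ⪯ S(M) ⪯ S(M')) with γ L(S(I)) ⪯ ρ I and L(H) ⪯ I. Then C ⪯ (k / (1 − ρ)) I. -/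
open Matrix

namespace CrudeBoundAux

variable {d : ℕ}

lemma psd_smul {M : Matrix (Fin d) (Fin d) ℝ} (hM : M.PosSemidef) {a : ℝ} (ha : 0 ≤ a) :
    (a • M).PosSemidef := by
  refine Matrix.PosSemidef.of_dotProduct_mulVec_nonneg (by
    have := hM.1.eq
    simp only [Matrix.IsHermitian, conjTranspose_smul]
    simpa [Matrix.IsHermitian] using congrArg (a • ·) this) fun x => ?_
  rw [smul_mulVec, dotProduct_smul, smul_eq_mul]
  exact mul_nonneg ha (hM.dotProduct_mulVec_nonneg x)

lemma pd_smul {M : Matrix (Fin d) (Fin d) ℝ} (hM : M.PosDef) {a : ℝ} (ha : 0 < a) :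
    (a • M).PosDef := by
  refine Matrix.PosDef.of_dotProduct_mulVec_pos ?_ ?_
  · have := hM.1.eq
    simp only [Matrix.IsHermitian, conjTranspose_smul]
    simpa [Matrix.IsHermitian] using congrArg (a • ·) this
  · intro x hx
    rw [smul_mulVec, dotProduct_smul, smul_eq_mul]
    exact mul_pos ha (hM.dotProduct_mulVec_pos hx)

lemma quad_eq (M : Matrix (Fin d) (Fin d) ℝ) (a : ℝ) (x : Fin d → ℝ) :
    star x ⬝ᵥ (a • (1 : Matrix (Fin d) (Fin d) ℝ) - M) *ᵥ x
      = a * (x ⬝ᵥ x) - x ⬝ᵥ M *ᵥ x := by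
  simp [sub_mulVec, smul_mulVec, dotProduct_sub, dotProduct_smul, one_mulVec]

lemma spectral_real {B : Matrix (Fin d) (Fin d) ℝ} (hB : B.IsHermitian) :
    B = (hB.eigenvectorUnitary : Matrix (Fin d) (Fin d) ℝ) * diagonal hB.eigenvalues
      * (star (hB.eigenvectorUnitary : Matrix (Fin d) (Fin d) ℝ)) := by
  have := hB.spectral_theorem
  simpa using this

lemma conj_sub (U : Matrix (Fin d) (Fin d) ℝ) (f g : Fin d → ℝ) :
    U * diagonal f * star U - U * diagonal g * star U
      = U * diagonal (fun i => f i - g i) * star U := by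
  have h : diagonal (fun i => f i - g i) = diagonal f - diagonal g := by
    rw [← Matrix.diagonal_sub]
  rw [h, Matrix.mul_sub, Matrix.sub_mul]

lemma pow_spectral {B : Matrix (Fin d) (Fin d) ℝ} (hB : B.IsHermitian) (t : ℕ) :
    B ^ t = (hB.eigenvectorUnitary : Matrix (Fin d) (Fin d) ℝ)
      * diagonal (fun i => hB.eigenvalues i ^ t)
      * (star (hB.eigenvectorUnitary : Matrix (Fin d) (Fin d) ℝ)) := by
  set U := (hB.eigenvectorUnitary : Matrix (Fin d) (Fin d) ℝ) with hU
  have hUU : U * star U = 1 := Matrix.mem_unitaryGroup_iff.mp hB.eigenvectorUnitary.2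
  have hUU' : star U * U = 1 := Matrix.mem_unitaryGroup_iff'.mp hB.eigenvectorUnitary.2
  induction t with
  | zero => simp [pow_zero, Matrix.diagonal_one, hUU]
  | succ t ih =>
      rw [pow_succ, ih]
      calc U * diagonal (fun i => hB.eigenvalues i ^ t) * star U * B
          = U * diagonal (fun i => hB.eigenvalues i ^ t) * star U *
            (U * diagonal hB.eigenvalues * star U) := congrArg (_ * ·) (spectral_real hB)
        _ = U * diagonal (fun i => hB.eigenvalues i ^ t) * (star U * U) *
            diagonal hB.eigenvalues * star U := by
            simp only [Matrix.mul_assoc]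
        _ = U * (diagonal (fun i => hB.eigenvalues i ^ t) * diagonal hB.eigenvalues) * star U := by
            rw [hUU']
            simp only [Matrix.mul_assoc, Matrix.mul_one, Matrix.one_mul]
        _ = U * diagonal (fun i => hB.eigenvalues i ^ (t+1)) * star U := by
            rw [Matrix.diagonal_mul_diagonal]
            simp [pow_succ]

lemma conj_diag_psd {B : Matrix (Fin d) (Fin d) ℝ} (hB : B.IsHermitian)
    {f : Fin d → ℝ} (hf : ∀ i, 0 ≤ f i) :
    ((hB.eigenvectorUnitary : Matrix (Fin d) (Fin d) ℝ) * diagonal f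
      * (star (hB.eigenvectorUnitary : Matrix (Fin d) (Fin d) ℝ))).PosSemidef := by
  have h := (Matrix.posSemidef_diagonal_iff.mpr hf).mul_mul_conjTranspose_same
    (hB.eigenvectorUnitary : Matrix (Fin d) (Fin d) ℝ)
  simpa [Matrix.star_eq_conjTranspose] using h

lemma smul_one_conj {B : Matrix (Fin d) (Fin d) ℝ} (hB : B.IsHermitian) (c : ℝ) :
    c • (1 : Matrix (Fin d) (Fin d) ℝ)
      = (hB.eigenvectorUnitary : Matrix (Fin d) (Fin d) ℝ) * diagonal (fun _ => c)
        * (star (hB.eigenvectorUnitary : Matrix (Fin d) (Fin d) ℝ)) := by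
  have hUU : (hB.eigenvectorUnitary : Matrix (Fin d) (Fin d) ℝ) *
      star (hB.eigenvectorUnitary : Matrix (Fin d) (Fin d) ℝ) = 1 :=
    Matrix.mem_unitaryGroup_iff.mp hB.eigenvectorUnitary.2
  rw [← Matrix.smul_one_eq_diagonal]
  rw [Matrix.mul_smul, Matrix.smul_mul, Matrix.mul_one, hUU]

lemma loewner_of_eig_le {B : Matrix (Fin d) (Fin d) ℝ} (hB : B.IsHermitian)
    {c : ℝ} (h : ∀ i, hB.eigenvalues i ≤ c) :
    (c • (1 : Matrix (Fin d) (Fin d) ℝ) - B).PosSemidef := by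
  have key : c • (1 : Matrix (Fin d) (Fin d) ℝ) - B
      = (hB.eigenvectorUnitary : Matrix (Fin d) (Fin d) ℝ)
        * diagonal (fun i => c - hB.eigenvalues i)
        * (star (hB.eigenvectorUnitary : Matrix (Fin d) (Fin d) ℝ)) := by
    rw [smul_one_conj hB c]
    rw [← conj_sub]
    exact congrArg (_ - ·) (spectral_real hB)
  rw [key]
  exact conj_diag_psd hB (fun i => sub_nonneg.mpr (h i))

lemma pow_loewner {B : Matrix (Fin d) (Fin d) ℝ} (hB : B.IsHermitian)
    {r : ℝ} (hnn : ∀ i, 0 ≤ hB.eigenvalues i) (hle : ∀ i, hB.eigenvalues i ≤ r) (t : ℕ) :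
    (r ^ t • (1 : Matrix (Fin d) (Fin d) ℝ) - B ^ t).PosSemidef := by
  have key : r ^ t • (1 : Matrix (Fin d) (Fin d) ℝ) - B ^ t
      = (hB.eigenvectorUnitary : Matrix (Fin d) (Fin d) ℝ)
        * diagonal (fun i => r ^ t - hB.eigenvalues i ^ t)
        * (star (hB.eigenvectorUnitary : Matrix (Fin d) (Fin d) ℝ)) := by
    rw [smul_one_conj hB (r ^ t), pow_spectral hB t, ← conj_sub]
  rw [key]
  exact conj_diag_psd hB (fun i => sub_nonneg.mpr (pow_le_pow_left₀ (hnn i) (hle i) t))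

lemma eig_lt_one {A : Matrix (Fin d) (Fin d) ℝ} (hA : A.PosSemidef)
    (hPD : ((1 : Matrix (Fin d) (Fin d) ℝ) - A).PosDef) (i : Fin d) :
    hA.1.eigenvalues i < 1 := by
  set v : Fin d → ℝ := ⇑(hA.1.eigenvectorBasis i) with hv
  have hv1 : v ⬝ᵥ v = 1 := by
    have h := orthonormal_iff_ite.mp hA.1.eigenvectorBasis.orthonormal i i
    rw [PiLp.inner_apply] at h
    simpa [PiLp.inner_apply, dotProduct, v, ← pow_two] using h
  have hvne : v ≠ 0 := by
    intro h
    rw [h] at hv1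
    simp at hv1
  have hq := hPD.dotProduct_mulVec_pos hvne
  have hmv : A *ᵥ v = hA.1.eigenvalues i • v := hA.1.mulVec_eigenvectorBasis i
  rw [sub_mulVec, one_mulVec, hmv] at hq
  simp only [star_trivial, dotProduct_sub, dotProduct_smul, smul_eq_mul, hv1, mul_one] at hq
  linarith

lemma quad_pair (M : Matrix (Fin d) (Fin d) ℝ) (i j : Fin d) (a b : ℝ) :
    (Pi.single i a + Pi.single j b) ⬝ᵥ M *ᵥ (Pi.single i a + Pi.single j b)
      = a * (M i i * a + M i j * b) + b * (M j i * a + M j j * b) := by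
  rw [Matrix.mulVec_add, Matrix.mulVec_single, Matrix.mulVec_single]
  rw [add_dotProduct, single_dotProduct, single_dotProduct]
  simp [mul_comm]

lemma entry_abs_le {B : Matrix (Fin d) (Fin d) ℝ} (hB : B.PosSemidef) {c : ℝ}
    (hc : (c • (1 : Matrix (Fin d) (Fin d) ℝ) - B).PosSemidef) (i j : Fin d) :
    |B i j| ≤ c := by
  have hsym : B j i = B i j := by
    have := congrFun (congrFun hB.1.eq i) j
    simpa [Matrix.conjTranspose_apply] using this
  have hdiag : ∀ l : Fin d, 0 ≤ B l l ∧ B l l ≤ c := by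
    intro l
    have h1 := hB.dotProduct_mulVec_nonneg (Pi.single l 1)
    have h2 := hc.dotProduct_mulVec_nonneg (Pi.single l 1)
    rw [star_trivial] at h1 h2
    have e1 : Pi.single l 1 ⬝ᵥ B *ᵥ Pi.single l 1 = B l l := by
      rw [Matrix.mulVec_single, single_dotProduct]; simp
    have e2 : Pi.single l 1 ⬝ᵥ (c • (1 : Matrix (Fin d) (Fin d) ℝ) - B) *ᵥ Pi.single l 1
        = c - B l l := by
      rw [Matrix.sub_mulVec, dotProduct_sub, smul_mulVec, dotProduct_smul, e1]
      rw [Matrix.one_mulVec, single_dotProduct]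
      simp
    rw [e1] at h1
    rw [e2] at h2
    constructor <;> linarith
  by_cases hij : i = j
  · subst hij
    exact abs_le.mpr ⟨by linarith [(hdiag i).1, (hdiag i).2], (hdiag i).2⟩
  · have key : ∀ s : ℝ,
        0 ≤ c * (1 + s * s) - (B i i + s * B i j + s * B i j + s * s * B j j) := by
      intro s
      have h2 := hc.dotProduct_mulVec_nonneg (Pi.single i 1 + Pi.single j s)
      rw [star_trivial, quad_pair] at h2
      have hji : ¬ (j = i) := fun h => hij h.symm
      simp only [Matrix.sub_apply, Matrix.smul_apply, Matrix.one_apply, smul_eq_mul,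
        hij, hji, if_true, if_false, ite_true, ite_false, eq_self_iff_true] at h2
      rw [hsym] at h2
      nlinarith [h2]
    have k1 := key 1
    have k2 := key (-1)
    have hii := (hdiag i).1
    have hjj := (hdiag j).1
    simp only [one_mul, mul_one, neg_mul, mul_neg, neg_neg] at k1 k2
    exact abs_le.mpr ⟨by nlinarith, by nlinarith⟩

lemma summable_conj {A : Matrix (Fin d) (Fin d) ℝ} (M : Matrix (Fin d) (Fin d) ℝ)
    {r : ℝ} (hr0 : 0 ≤ r) (hr1 : r < 1)
    (hent : ∀ (t : ℕ) (k l : Fin d), |(A ^ t) k l| ≤ r ^ t) :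
    Summable (fun t : ℕ => A ^ t * M * A ^ t) := by
  refine Pi.summable.mpr fun i => Pi.summable.mpr fun j => ?_
  set K : ℝ := ∑ l, ∑ k, |M k l| with hK
  have hb : ∀ t : ℕ, |(A ^ t * M * A ^ t) i j| ≤ K * (r * r) ^ t := by
    intro t
    have h1 : (A ^ t * M * A ^ t) i j
        = ∑ l, (∑ k, (A ^ t) i k * M k l) * (A ^ t) l j := by
      simp [Matrix.mul_apply]
    rw [h1]
    have hrt : (0 : ℝ) ≤ r ^ t := pow_nonneg hr0 t
    calc |∑ l, (∑ k, (A ^ t) i k * M k l) * (A ^ t) l j|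
        ≤ ∑ l, |(∑ k, (A ^ t) i k * M k l) * (A ^ t) l j| :=
          Finset.abs_sum_le_sum_abs _ _
      _ ≤ ∑ l, ((∑ k, |M k l|) * r ^ t) * r ^ t := by
          refine Finset.sum_le_sum fun l _ => ?_
          rw [abs_mul]
          have h2 : |∑ k, (A ^ t) i k * M k l| ≤ (∑ k, |M k l|) * r ^ t := by
            refine (Finset.abs_sum_le_sum_abs _ _).trans ?_
            rw [Finset.sum_mul]
            refine Finset.sum_le_sum fun k _ => ?_
            rw [abs_mul]
            calc |(A ^ t) i k| * |M k l| ≤ r ^ t * |M k l| :=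
                  mul_le_mul_of_nonneg_right (hent t i k) (abs_nonneg _)
              _ = |M k l| * r ^ t := mul_comm _ _
          exact mul_le_mul h2 (hent t l j) (abs_nonneg _)
            (mul_nonneg (Finset.sum_nonneg fun k _ => abs_nonneg _) hrt)
      _ = K * (r * r) ^ t := by
          rw [← Finset.sum_mul, ← Finset.sum_mul, mul_pow]
          ring
  have hgeo : Summable (fun t : ℕ => K * (r * r) ^ t) :=
    (summable_geometric_of_lt_one (by positivity) (by nlinarith)).mul_left K
  exact (Summable.of_nonneg_of_le (fun t => abs_nonneg _) hb hgeo).of_abs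

lemma psd_tsum {f : ℕ → Matrix (Fin d) (Fin d) ℝ} (hf : Summable f)
    (hpsd : ∀ t, (f t).PosSemidef) : (∑' t, f t).PosSemidef := by
  have happ : ∀ i j, (∑' t, f t) i j = ∑' t, f t i j := by
    intro i j
    erw [tsum_apply hf, tsum_apply (Pi.summable.mp hf i)]
  refine Matrix.PosSemidef.of_dotProduct_mulVec_nonneg (Matrix.ext fun i j => ?_) fun x => ?_
  · rw [Matrix.conjTranspose_apply, star_trivial, happ, happ]
    refine tsum_congr fun t => ?_
    have := congrFun (congrFun (hpsd t).1.eq i) j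
    simpa [Matrix.conjTranspose_apply] using this
  · let Φ₀ : Matrix (Fin d) (Fin d) ℝ →ₗ[ℝ] ℝ :=
      { toFun := fun M => x ⬝ᵥ M *ᵥ x
        map_add' := fun M N => by
          show x ⬝ᵥ (M + N) *ᵥ x = x ⬝ᵥ M *ᵥ x + x ⬝ᵥ N *ᵥ x
          rw [Matrix.add_mulVec, dotProduct_add]
        map_smul' := fun a M => by
          show x ⬝ᵥ (a • M) *ᵥ x = a • (x ⬝ᵥ M *ᵥ x)
          rw [Matrix.smul_mulVec, dotProduct_smul] }
    let Φ := LinearMap.toContinuousLinearMap Φ₀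
    have hs : HasSum (fun t => Φ (f t)) (Φ (∑' t, f t)) := hf.hasSum.mapL Φ
    have h0 : (0 : ℝ) ≤ Φ (∑' t, f t) := by
      refine hasSum_le (fun t => ?_) hasSum_zero hs
      have := (hpsd t).dotProduct_mulVec_nonneg x
      rw [star_trivial] at this
      simpa [Φ, Φ₀] using this
    rw [star_trivial]
    simpa [Φ, Φ₀] using h0

end CrudeBoundAux

open CrudeBoundAux in
/-- Iterating the recursive Loewner domination `C ⪯ γ L(S(C)) + k L(H)`
(with `γ L(S(I)) ⪯ ρ I`, `L(H) ⪯ I`, `S` monotone linear, `ρ ∈ [0,1)`,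
`k ≥ 0`) yields `C ⪯ (k/(1−ρ)) I`, where
`L(M) = γ Σ_t (I−γH)^t M (I−γH)^t`. -/
theorem crude_stationary_covariance_bound
    {d : ℕ} (H : Matrix (Fin d) (Fin d) ℝ) (hH : H.PosDef)
    (γ : ℝ) (hγ : 0 < γ)
    (hle : ((1 : Matrix (Fin d) (Fin d) ℝ) - γ • H).PosSemidef)
    (L : Matrix (Fin d) (Fin d) ℝ → Matrix (Fin d) (Fin d) ℝ)
    (hL : ∀ M, L M = γ • ∑' t : ℕ,
        ((1 : Matrix (Fin d) (Fin d) ℝ) - γ • H) ^ t * M *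
        ((1 : Matrix (Fin d) (Fin d) ℝ) - γ • H) ^ t)
    (S : Matrix (Fin d) (Fin d) ℝ →ₗ[ℝ] Matrix (Fin d) (Fin d) ℝ)
    (hSmono : ∀ M M' : Matrix (Fin d) (Fin d) ℝ, M.PosSemidef →
      (M' - M).PosSemidef → (S M).PosSemidef ∧ (S M' - S M).PosSemidef)
    (ρ k : ℝ) (hρ0 : 0 ≤ ρ) (hρ1 : ρ < 1) (hk : 0 ≤ k)
    (hρ : (ρ • (1 : Matrix (Fin d) (Fin d) ℝ) - γ • L (S 1)).PosSemidef)
    (hLH : ((1 : Matrix (Fin d) (Fin d) ℝ) - L H).PosSemidef)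
    (C : Matrix (Fin d) (Fin d) ℝ) (hC : C.PosSemidef)
    (hrec : ((γ • L (S C) + k • L H) - C).PosSemidef) :
    ((k / (1 - ρ)) • (1 : Matrix (Fin d) (Fin d) ℝ) - C).PosSemidef := by
  classical
  by_cases hd : d = 0
  · subst hd
    refine Matrix.PosSemidef.of_dotProduct_mulVec_nonneg (Matrix.ext fun i j => i.elim0) fun x => ?_
    simp [dotProduct]
  · haveI : Nonempty (Fin d) := ⟨⟨0, Nat.pos_of_ne_zero hd⟩⟩
    set A := (1 : Matrix (Fin d) (Fin d) ℝ) - γ • H with hAdef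
    have hA : A.PosSemidef := hle
    have hPD : ((1 : Matrix (Fin d) (Fin d) ℝ) - A).PosDef := by
      rw [hAdef, sub_sub_cancel]
      exact pd_smul hH hγ
    have heignn : ∀ i, 0 ≤ hA.1.eigenvalues i := hA.eigenvalues_nonneg
    have heiglt : ∀ i, hA.1.eigenvalues i < 1 := eig_lt_one hA hPD
    set r : ℝ := Finset.univ.sup' Finset.univ_nonempty hA.1.eigenvalues with hrdef
    have hrle : ∀ i, hA.1.eigenvalues i ≤ r := fun i => Finset.le_sup' _ (Finset.mem_univ i)
    have hr0 : 0 ≤ r := le_trans (heignn (Classical.arbitrary _)) (hrle _)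
    have hr1 : r < 1 := (Finset.sup'_lt_iff _).mpr fun i _ => heiglt i
    have hent : ∀ (t : ℕ) (p q : Fin d), |(A ^ t) p q| ≤ r ^ t :=
      fun t p q => entry_abs_le (hA.pow t) (pow_loewner hA.1 heignn hrle t) p q
    have hsum : ∀ M, Summable (fun t : ℕ => A ^ t * M * A ^ t) :=
      fun M => summable_conj M hr0 hr1 hent
    -- properties of L
    have Lpsd : ∀ M, M.PosSemidef → (L M).PosSemidef := by
      intro M hM
      rw [hL]
      refine psd_smul (psd_tsum (hsum M) fun t => ?_) hγ.le
      have h := hM.mul_mul_conjTranspose_same (A ^ t)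
      rwa [(hA.1.pow t).eq] at h
    have Ladd : ∀ M N, L (M + N) = L M + L N := by
      intro M N
      rw [hL, hL, hL]
      have h : (∑' t : ℕ, A ^ t * (M + N) * A ^ t)
          = ∑' t : ℕ, ((A ^ t * M * A ^ t) + (A ^ t * N * A ^ t)) :=
        tsum_congr fun t => by rw [Matrix.mul_add, Matrix.add_mul]
      rw [h, Summable.tsum_add (hsum M) (hsum N), smul_add]
    have Lsub : ∀ M N, L (M - N) = L M - L N := by
      intro M N
      have h := Ladd (M - N) N
      rw [sub_add_cancel] at h
      exact eq_sub_of_add_eq h.symm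
    have Lsmul : ∀ (a : ℝ) (M), L (a • M) = a • L M := by
      intro a M
      rw [hL, hL]
      have h : (∑' t : ℕ, A ^ t * (a • M) * A ^ t)
          = ∑' t : ℕ, a • (A ^ t * M * A ^ t) :=
        tsum_congr fun t => by rw [mul_smul_comm, smul_mul_assoc]
      rw [h, ((hsum M).hasSum.const_smul a).tsum_eq, smul_comm]
    -- base bound for C
    set c0 : ℝ := ∑ i, hC.1.eigenvalues i with hc0
    have hc0nn : 0 ≤ c0 := Finset.sum_nonneg fun i _ => hC.eigenvalues_nonneg i
    have hbase : (c0 • (1 : Matrix (Fin d) (Fin d) ℝ) - C).PosSemidef :=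
      loewner_of_eig_le hC.1 fun i =>
        Finset.single_le_sum (fun j _ => hC.eigenvalues_nonneg j) (Finset.mem_univ i)
    -- the iterated scalar bound
    set c : ℕ → ℝ := fun n => ρ ^ n * c0 + k * ∑ i ∈ Finset.range n, ρ ^ i with hcdef
    have hcnn : ∀ n, 0 ≤ c n := fun n =>
      add_nonneg (mul_nonneg (pow_nonneg hρ0 n) hc0nn)
        (mul_nonneg hk (Finset.sum_nonneg fun i _ => pow_nonneg hρ0 i))
    have hrecur : ∀ n, c (n + 1) = ρ * c n + k := by
      intro n
      simp only [hcdef]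
      rw [geom_sum_succ]
      ring
    have hcb : ∀ n, (c n • (1 : Matrix (Fin d) (Fin d) ℝ) - C).PosSemidef := by
      intro n
      induction n with
      | zero => simpa [hcdef] using hbase
      | succ n ih =>
          have hmono := hSmono C (c n • (1 : Matrix (Fin d) (Fin d) ℝ)) hC ih
          have P2 : (L (S (c n • (1 : Matrix (Fin d) (Fin d) ℝ))) - L (S C)).PosSemidef := by
            have h := Lpsd _ hmono.2
            rwa [Lsub] at h
          have P2' := psd_smul P2 hγ.le
          have P3 := psd_smul hρ (hcnn n)
          have P4 := psd_smul hLH hk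
          have Psum := ((hrec.add P2').add P3).add P4
          have hSsmul : S (c n • (1 : Matrix (Fin d) (Fin d) ℝ)) = c n • S 1 :=
            map_smul S _ _
          have hkey : ((γ • L (S C) + k • L H) - C)
              + γ • (L (S (c n • (1 : Matrix (Fin d) (Fin d) ℝ))) - L (S C))
              + c n • (ρ • (1 : Matrix (Fin d) (Fin d) ℝ) - γ • L (S 1))
              + k • ((1 : Matrix (Fin d) (Fin d) ℝ) - L H)
              = c (n + 1) • (1 : Matrix (Fin d) (Fin d) ℝ) - C := by
            rw [hSsmul, Lsmul, hrecur n]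
            module
          rw [hkey] at Psum
          exact Psum
    -- take limits
    have hgeomlim : Filter.Tendsto (fun n : ℕ => ρ ^ n) Filter.atTop (nhds 0) :=
      tendsto_pow_atTop_nhds_zero_of_lt_one hρ0 hρ1
    have hsumgeo : Filter.Tendsto (fun n : ℕ => ∑ i ∈ Finset.range n, ρ ^ i)
        Filter.atTop (nhds (1 - ρ)⁻¹) :=
      (hasSum_geometric_of_lt_one hρ0 hρ1).tendsto_sum_nat
    have hlim : Filter.Tendsto c Filter.atTop (nhds (k / (1 - ρ))) := by
      have h := (hgeomlim.mul_const c0).add (hsumgeo.const_mul k)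
      have he : (0 : ℝ) * c0 + k * (1 - ρ)⁻¹ = k / (1 - ρ) := by
        rw [zero_mul, zero_add, div_eq_mul_inv]
      rw [he] at h
      exact h
    refine Matrix.PosSemidef.of_dotProduct_mulVec_nonneg ?_ fun x => ?_
    · have h1 : ((k / (1 - ρ)) • (1 : Matrix (Fin d) (Fin d) ℝ)).IsHermitian := by
        rw [Matrix.smul_one_eq_diagonal]
        exact Matrix.isHermitian_diagonal _
      exact h1.sub hC.1
    · rw [quad_eq]
      have hn : ∀ n, 0 ≤ c n * (x ⬝ᵥ x) - x ⬝ᵥ C *ᵥ x := by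
        intro n
        have h := (hcb n).dotProduct_mulVec_nonneg x
        rwa [quad_eq] at h
      have ht : Filter.Tendsto (fun n => c n * (x ⬝ᵥ x) - x ⬝ᵥ C *ᵥ x) Filter.atTop
          (nhds (k / (1 - ρ) * (x ⬝ᵥ x) - x ⬝ᵥ C *ᵥ x)) :=
        (hlim.mul_const _).sub_const _
      exact ge_of_tendsto' ht hn
end
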